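/- Let α = (α_1, …, α_d) be rational numbers in (0,1), let m be the least common multiple of their denominators, and assume α is Galois-stable: for every integer c coprime to m, the multiset {cα_1 mod ℤ, …, cα_d mod ℤ} equals {α_1 mod ℤ, …, α_d mod ℤ}. Then for every prime p not dividing m and every integer k ≥ 0, the rational number (α_1)_k ⋯ (α_d)_k / k!^d is p-integral (its p-adic valuation is ≥ 0); equivalently, it lies in ℤ[1/m]. -/

import Mathlib

open Finset

/-- The ascending Pochhammer polynomial evaluates to a product. -/
lemma ascPochhammer_eval_prod_range {R : Type*} [CommSemiring R] (k : ℕ) (x : R) :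
    (ascPochhammer R k).eval x = ∏ j ∈ Finset.range k, (x + j) := by
  induction k with
  | zero => simp
  | succ n ih =>
    rw [ascPochhammer_succ_right, Finset.prod_range_succ, ← ih]
    simp [Polynomial.eval_mul]

lemma prod_range_add_nat (b k : ℕ) :
    ∏ j ∈ Finset.range k, (b + j) = b.ascFactorial k := by
  induction k with
  | zero => simp
  | succ n ih => rw [Finset.prod_range_succ, ih, Nat.ascFactorial_succ, mul_comm]

/-- In `ZMod q` with `q ∣ k!`, any product `x(x+1)⋯(x+k-1)` vanishes. -/
lemma prod_range_add_eq_zero (q k : ℕ) [NeZero q] (hq : q ∣ k.factorial)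
    (x : ZMod q) : ∏ j ∈ Finset.range k, (x + j) = 0 := by
  obtain ⟨b, rfl⟩ := ZMod.natCast_zmod_surjective x
  have : ((∏ j ∈ Finset.range k, (b + j) : ℕ) : ZMod q) = 0 := by
    rw [ZMod.natCast_eq_zero_iff]
    exact hq.trans ((prod_range_add_nat b k) ▸ Nat.factorial_dvd_ascFactorial b k)
  push_cast at this
  exact this

/-- Key divisibility: if `p ∤ N`, then `p ^ v_p(k!)` divides `∏_{j<k} (a + jN)`. -/
lemma pow_padicValNat_factorial_dvd_prod (p : ℕ) (hp : p.Prime) (N a : ℤ)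
    (hN : ¬ (p : ℤ) ∣ N) (k : ℕ) :
    (p : ℤ) ^ (padicValNat p k.factorial) ∣ ∏ j ∈ Finset.range k, (a + j * N) := by
  set q : ℕ := p ^ (padicValNat p k.factorial) with hqdef
  have hq0 : q ≠ 0 := pow_ne_zero _ hp.ne_zero
  haveI : NeZero q := ⟨hq0⟩
  have hqfac : q ∣ k.factorial := by
    rw [hqdef]
    exact pow_padicValNat_dvd
  -- coprimality of N and q in ℤ
  have hcop : IsCoprime ((q : ℕ) : ℤ) N := by
    have hpN : IsCoprime ((p : ℕ) : ℤ) N :=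
      (Nat.prime_iff_prime_int.mp hp).coprime_iff_not_dvd.mpr hN
    rw [hqdef]
    push_cast
    exact hpN.pow_left
  obtain ⟨u, v, huv⟩ := hcop
  -- In ZMod q : (v : ZMod q) * N = 1
  have hone : (v : ZMod q) * (N : ZMod q) = 1 := by
    have := congrArg (fun z : ℤ => (z : ZMod q)) huv
    simpa using this
  rw [← Int.natCast_pow, ← hqdef, ← ZMod.intCast_zmod_eq_zero_iff_dvd]
  push_cast
  have hfact : ∀ j : ℕ, ((a : ZMod q) + (j : ZMod q) * (N : ZMod q))
      = (N : ZMod q) * (((v : ZMod q) * (a : ZMod q)) + (j : ZMod q)) := by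
    intro j
    rw [mul_add, ← mul_assoc, mul_comm (N : ZMod q) (v : ZMod q), hone]
    ring
  calc ∏ j ∈ Finset.range k, ((a : ZMod q) + (j : ZMod q) * (N : ZMod q))
      = ∏ j ∈ Finset.range k, ((N : ZMod q) * (((v : ZMod q) * (a : ZMod q)) + (j : ZMod q))) := by
        exact Finset.prod_congr rfl fun j _ => hfact j
    _ = (N : ZMod q) ^ k * ∏ j ∈ Finset.range k, (((v : ZMod q) * (a : ZMod q)) + (j : ZMod q)) := by
        rw [Finset.prod_mul_distrib, Finset.prod_const, Finset.card_range]
    _ = 0 := by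
        rw [prod_range_add_eq_zero q k hqfac, mul_zero]

/-- Single-factor integrality: `v_p((x)_k) ≥ v_p(k!)` when `p ∤ den(x)` and `x > 0`. -/
lemma padicValRat_ascPochhammer_ge (p : ℕ) (hp : p.Prime) (x : ℚ) (hx : 0 < x)
    (hden : ¬ p ∣ x.den) (k : ℕ) :
    (padicValNat p k.factorial : ℤ) ≤ padicValRat p ((ascPochhammer ℚ k).eval x) := by
  haveI : Fact p.Prime := ⟨hp⟩
  have hnum : 0 < x.num := Rat.num_pos.mpr hx
  set P : ℤ := ∏ j ∈ Finset.range k, (x.num + j * x.den) with hPdef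
  have hPpos : 0 < P := by
    apply Finset.prod_pos
    intro j _
    positivity
  -- eval = P / den^k
  have heval : (ascPochhammer ℚ k).eval x = (P : ℚ) / ((x.den : ℚ)) ^ k := by
    rw [ascPochhammer_eval_prod_range]
    have hd : ((x.den : ℚ)) ≠ 0 := by positivity
    have hx' : (x.num : ℚ) = x * x.den := by
      rw [← div_eq_iff hd]; exact Rat.num_div_den x
    have h1 : ∀ j ∈ Finset.range k,
        x + (j : ℚ) = ((x.num + j * x.den : ℤ) : ℚ) / (x.den : ℚ) := by
      intro j _
      rw [eq_div_iff hd]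
      push_cast
      rw [hx']
      ring
    rw [Finset.prod_congr rfl h1, Finset.prod_div_distrib, Finset.prod_const,
      Finset.card_range, hPdef]
    push_cast
    ring
  have hdvd : (p : ℤ) ^ (padicValNat p k.factorial) ∣ P := by
    apply pow_padicValNat_factorial_dvd_prod p hp _ _ _ k
    exact_mod_cast fun h => hden (Int.ofNat_dvd.mp h)
  have hvalP : (padicValNat p k.factorial : ℤ) ≤ padicValInt p P := by
    rcases (padicValInt_dvd_iff _ P).mp hdvd with h | h
    · exact absurd h hPpos.ne'
    · exact_mod_cast h
  have hP0 : (P : ℚ) ≠ 0 := by exact_mod_cast hPpos.ne'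
  have hd0 : ((x.den : ℚ)) ^ k ≠ 0 := by positivity
  rw [heval, padicValRat.div hP0 hd0, padicValRat.of_int,
    padicValRat.pow ((x.den : ℚ))]
  have hden0 : padicValRat p (x.den : ℚ) = 0 := by
    rw [← padicValRat_of_nat, padicValNat.eq_zero_of_not_dvd hden]
    simp
  rw [hden0, mul_zero, sub_zero]
  exact hvalP

/-- `padicValRat` of a finite product. -/
lemma padicValRat_prod (p : ℕ) [Fact p.Prime] {ι : Type*} (s : Finset ι) (f : ι → ℚ)
    (hf : ∀ i ∈ s, f i ≠ 0) :
    padicValRat p (∏ i ∈ s, f i) = ∑ i ∈ s, padicValRat p (f i) := by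
  classical
  induction s using Finset.cons_induction with
  | empty => simp
  | cons a s ha ih =>
    rw [Finset.prod_cons, Finset.sum_cons,
      padicValRat.mul (hf a (Finset.mem_cons_self a s))
        (Finset.prod_ne_zero_iff.mpr fun i hi => hf i (Finset.mem_cons_of_mem hi)),
      ih fun i hi => hf i (Finset.mem_cons_of_mem hi)]

/-- For a Galois-stable vector `α` of rationals in `(0,1)` with `m`
the lcm of the denominators, the hypergeometric coefficients
`(α₁)_k ⋯ (α_d)_k / k!^d` are `p`-integral for every prime `p ∤ m`. -/
theorem hypergeometric_coefficients_p_integral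
    (d : ℕ) (α : Fin d → ℚ)
    (hα : ∀ i, 0 < α i ∧ α i < 1)
    (m : ℕ) (hm : m = Finset.univ.lcm fun i => (α i).den)
    (hgal : ∀ c : ℤ, IsCoprime c (m : ℤ) →
      Multiset.map (fun i => Int.fract ((c : ℚ) * α i)) Finset.univ.val
        = Multiset.map α Finset.univ.val)
    (p : ℕ) (hp : p.Prime) (hpm : ¬ p ∣ m) (k : ℕ) :
    0 ≤ padicValRat p
      ((∏ i, (ascPochhammer ℚ k).eval (α i)) / (k.factorial : ℚ) ^ d) := by
  haveI : Fact p.Prime := ⟨hp⟩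
  have hdenm : ∀ i, (α i).den ∣ m := by
    intro i
    rw [hm]
    exact Finset.dvd_lcm (Finset.mem_univ i)
  have hpden : ∀ i, ¬ p ∣ (α i).den := fun i h => hpm (h.trans (hdenm i))
  have hfne : ∀ i : Fin d, (ascPochhammer ℚ k).eval (α i) ≠ 0 :=
    fun i => (ascPochhammer_pos k (α i) (hα i).1).ne'
  have hfacne : ((k.factorial : ℚ)) ≠ 0 := by
    exact_mod_cast k.factorial_ne_zero
  have hfacpowne : ((k.factorial : ℚ)) ^ d ≠ 0 := pow_ne_zero _ hfacne
  have hprodne : (∏ i, (ascPochhammer ℚ k).eval (α i)) ≠ 0 :=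
    Finset.prod_ne_zero_iff.mpr fun i _ => hfne i
  rw [padicValRat.div hprodne hfacpowne,
    padicValRat_prod p Finset.univ _ fun i _ => hfne i,
    padicValRat.pow ((k.factorial : ℚ))]
  have hfacval : padicValRat p (k.factorial : ℚ) = (padicValNat p k.factorial : ℤ) := by
    rw [← padicValRat_of_nat]
  have hbound : ∀ i : Fin d, (padicValNat p k.factorial : ℤ)
      ≤ padicValRat p ((ascPochhammer ℚ k).eval (α i)) :=
    fun i => padicValRat_ascPochhammer_ge p hp (α i) (hα i).1 (hpden i) k
  have hsum : (d : ℤ) * (padicValNat p k.factorial : ℤ)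
      ≤ ∑ i, padicValRat p ((ascPochhammer ℚ k).eval (α i)) := by
    calc (d : ℤ) * (padicValNat p k.factorial : ℤ)
        = ∑ _i : Fin d, (padicValNat p k.factorial : ℤ) := by
          rw [Finset.sum_const, Finset.card_univ, Fintype.card_fin, nsmul_eq_mul]
      _ ≤ ∑ i, padicValRat p ((ascPochhammer ℚ k).eval (α i)) :=
          Finset.sum_le_sum fun i _ => hbound i
  rw [hfacval]
  linarith
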